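/- arXiv:math/0410052 — 3 statements merged into one kernel-verified Lean document; each statement's English description precedes it below -/
import Mathlib

section
/- Let S be a Polish space and let μ, ν be Borel probability measures on S. Then sup { |∫ f dμ − ∫ f dν| : f : S → ℝ bounded continuous with |f(x) − f(y)| ≤ 1 for all x, y ∈ S } = (1/2) ‖μ − ν‖_v, where ‖·‖_v denotes the total variation norm of a finite signed Borel measure. -/
open MeasureTheory ProbabilityTheory ENNReal Set

noncomputable section

/-- The total variation norm `‖μ - ν‖_v` of the difference of two finite measures:
the total mass of the positive part plus that of the negative part of the
Hahn–Jordan decomposition of `μ - ν`. -/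
def tvDist {α : Type*} [MeasurableSpace α] (μ ν : Measure α) : ℝ≥0∞ :=
  (μ - ν) Set.univ + (ν - μ) Set.univ

section Aux

variable {α : Type*} [MeasurableSpace α]

lemma restrict_le_restrict_of_forall {μ ν : Measure α} {s : Set α} (hs : MeasurableSet s)
    (h : ∀ t, MeasurableSet t → t ⊆ s → ν t ≤ μ t) : ν.restrict s ≤ μ.restrict s := by
  rw [Measure.le_iff]
  intro t ht
  rw [Measure.restrict_apply ht, Measure.restrict_apply ht]
  exact h _ (ht.inter hs) inter_subset_right

lemma sub_univ_eq (μ ν : Measure α) [IsFiniteMeasure μ] [IsFiniteMeasure ν]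
    {s : Set α} (hs : MeasurableSet s)
    (h1 : ∀ t, MeasurableSet t → t ⊆ s → ν t ≤ μ t)
    (h2 : ∀ t, MeasurableSet t → t ⊆ sᶜ → μ t ≤ ν t) :
    (μ - ν) Set.univ = μ s - ν s := by
  have hle : ν.restrict s ≤ μ.restrict s := restrict_le_restrict_of_forall hs h1
  have hle' : μ.restrict sᶜ ≤ ν.restrict sᶜ := restrict_le_restrict_of_forall hs.compl h2
  have h0 : (μ - ν) sᶜ = 0 := Measure.sub_apply_eq_zero_of_restrict_le_restrict hle' hs.compl
  have hsv : (μ - ν) s = μ s - ν s := by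
    calc (μ - ν) s = (μ - ν).restrict s s := (Measure.restrict_apply_self _ _).symm
      _ = (μ.restrict s - ν.restrict s) s := by
            rw [Measure.restrict_sub_eq_restrict_sub_restrict hs]
      _ = μ.restrict s s - ν.restrict s s := Measure.sub_apply hs hle
      _ = μ s - ν s := by rw [Measure.restrict_apply_self, Measure.restrict_apply_self]
  rw [← measure_add_measure_compl hs, hsv, h0, add_zero]

end Aux

/-- **Dual form of the total variation distance**: for Borel probability measures
`μ, ν` on a Polish space,
`sup { |∫ f dμ - ∫ f dν| : f bounded continuous, |f x - f y| ≤ 1 } = ½ ‖μ - ν‖_v`. -/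
theorem sup_bc_eq_half_tv
    {S : Type*} [TopologicalSpace S] [PolishSpace S] [MeasurableSpace S] [BorelSpace S]
    (μ ν : Measure S) [IsProbabilityMeasure μ] [IsProbabilityMeasure ν] :
    (⨆ f ∈ {f : S → ℝ | Continuous f ∧ (∃ M, ∀ x, |f x| ≤ M) ∧
        ∀ x y, |f x - f y| ≤ 1},
      ENNReal.ofReal |∫ x, f x ∂μ - ∫ x, f x ∂ν|) = tvDist μ ν / 2 := by
  haveI : NormalSpace S := by letI := TopologicalSpace.upgradeIsCompletelyMetrizable S; infer_instance
  have hSne : Nonempty S := by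
    by_contra h
    rw [not_nonempty_iff] at h
    have h1 : μ univ = 1 := measure_univ
    rw [Set.univ_eq_empty_iff.mpr h, measure_empty] at h1
    exact zero_ne_one h1
  obtain ⟨s, hs, hs1, hs2⟩ := hahn_decomposition (μ := μ) (ν := ν)
  set a : ℝ := (μ s).toReal with ha
  set b : ℝ := (ν s).toReal with hb
  have hb0 : (0:ℝ) ≤ b := ENNReal.toReal_nonneg
  have hba : b ≤ a := ENNReal.toReal_mono (measure_ne_top μ s) (hs1 s hs Subset.rfl)
  have hμs : μ s = ENNReal.ofReal a := (ENNReal.ofReal_toReal (measure_ne_top μ s)).symm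
  have hνs : ν s = ENNReal.ofReal b := (ENNReal.ofReal_toReal (measure_ne_top ν s)).symm
  have ha1 : a ≤ 1 := by
    rw [ha]
    have : μ s ≤ 1 := prob_le_one
    simpa using ENNReal.toReal_mono (by simp) this
  -- the two masses
  have key1 : μ s - ν s = ENNReal.ofReal (a - b) := by
    rw [hμs, hνs, ← ENNReal.ofReal_sub a hb0]
  have hμsc : μ sᶜ = ENNReal.ofReal (1 - a) := by
    rw [prob_compl_eq_one_sub hs, hμs, ← ENNReal.ofReal_one,
      ← ENNReal.ofReal_sub 1 ENNReal.toReal_nonneg]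
  have hνsc : ν sᶜ = ENNReal.ofReal (1 - b) := by
    rw [prob_compl_eq_one_sub hs, hνs, ← ENNReal.ofReal_one,
      ← ENNReal.ofReal_sub 1 ENNReal.toReal_nonneg]
  have key2 : ν sᶜ - μ sᶜ = ENNReal.ofReal (a - b) := by
    rw [hμsc, hνsc, ← ENNReal.ofReal_sub _ (by linarith)]
    congr 1
    ring
  have hRHS : tvDist μ ν / 2 = ENNReal.ofReal (a - b) := by
    have hpos : (μ - ν) univ = ENNReal.ofReal (a - b) := by
      rw [sub_univ_eq μ ν hs hs1 hs2, key1]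
    have hneg : (ν - μ) univ = ENNReal.ofReal (a - b) := by
      have := sub_univ_eq ν μ hs.compl hs2 (by rw [compl_compl]; exact hs1)
      rw [this, key2]
    rw [tvDist, hpos, hneg, ← two_mul, mul_comm, mul_div_assoc,
      ENNReal.div_self (by norm_num) (by norm_num), mul_one]
  rw [hRHS]
  -- restricted decomposition measures
  have hres1 : ν.restrict s ≤ μ.restrict s := restrict_le_restrict_of_forall hs hs1
  have hres2 : μ.restrict sᶜ ≤ ν.restrict sᶜ := restrict_le_restrict_of_forall hs.compl hs2
  set ρp : Measure S := μ.restrict s - ν.restrict s with hρp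
  set ρm : Measure S := ν.restrict sᶜ - μ.restrict sᶜ with hρm
  set κ : Measure S := ν.restrict s + μ.restrict sᶜ with hκ
  haveI : IsFiniteMeasure ρp := isFiniteMeasure_of_le (μ.restrict s) Measure.sub_le
  haveI : IsFiniteMeasure ρm := isFiniteMeasure_of_le (ν.restrict sᶜ) Measure.sub_le
  haveI : IsFiniteMeasure κ := by rw [hκ]; infer_instance
  have hμdec : μ = ρp + κ := by
    have h1 : ρp + ν.restrict s = μ.restrict s := Measure.sub_add_cancel_of_le hres1
    calc μ = μ.restrict s + μ.restrict sᶜ := (Measure.restrict_add_restrict_compl hs).symm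
      _ = ρp + ν.restrict s + μ.restrict sᶜ := by rw [h1]
      _ = ρp + κ := by rw [hκ, add_assoc]
  have hνdec : ν = ρm + κ := by
    have h1 : ρm + μ.restrict sᶜ = ν.restrict sᶜ := Measure.sub_add_cancel_of_le hres2
    calc ν = ν.restrict s + ν.restrict sᶜ := (Measure.restrict_add_restrict_compl hs).symm
      _ = ν.restrict s + (ρm + μ.restrict sᶜ) := by rw [h1]
      _ = ρm + κ := by rw [hκ, add_left_comm]
  have hρpu : ρp univ = ENNReal.ofReal (a - b) := by
    rw [hρp, Measure.sub_apply MeasurableSet.univ hres1, Measure.restrict_apply_univ,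
      Measure.restrict_apply_univ, key1]
  have hρmu : ρm univ = ENNReal.ofReal (a - b) := by
    rw [hρm, Measure.sub_apply MeasurableSet.univ hres2, Measure.restrict_apply_univ,
      Measure.restrict_apply_univ, key2]
  have hab0 : (0:ℝ) ≤ a - b := by linarith
  have hρpuR : (ρp univ).toReal = a - b := by rw [hρpu, ENNReal.toReal_ofReal hab0]
  have hρmuR : (ρm univ).toReal = a - b := by rw [hρmu, ENNReal.toReal_ofReal hab0]
  apply le_antisymm
  · -- upper bound
    refine iSup₂_le fun f hf => ?_
    obtain ⟨hfc, ⟨M, hM⟩, hosc⟩ := hf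
    have hint : ∀ (τ : Measure S), IsFiniteMeasure τ → Integrable f τ := by
      intro τ hτ
      refine ⟨hfc.aestronglyMeasurable, ?_⟩
      exact HasFiniteIntegral.of_bounded (C := M)
        (ae_of_all _ fun x => by simpa [Real.norm_eq_abs] using hM x)
    have hμint : ∫ x, f x ∂μ = ∫ x, f x ∂ρp + ∫ x, f x ∂κ := by
      rw [hμdec]
      exact integral_add_measure (hint _ inferInstance) (hint _ inferInstance)
    have hνint : ∫ x, f x ∂ν = ∫ x, f x ∂ρm + ∫ x, f x ∂κ := by
      rw [hνdec]
      exact integral_add_measure (hint _ inferInstance) (hint _ inferInstance)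
    -- centering constant
    have hne : (range f).Nonempty := range_nonempty f
    have hbdd : BddBelow (range f) := by
      refine ⟨-M, ?_⟩
      rintro y ⟨x, rfl⟩
      exact neg_le_of_abs_le (hM x)
    set c : ℝ := sInf (range f) + 1/2 with hc
    have hfc2 : ∀ x, |f x - c| ≤ 1/2 := by
      intro x
      rw [abs_le]
      have h1 : sInf (range f) ≤ f x := csInf_le hbdd (mem_range_self x)
      have h2 : f x - 1 ≤ sInf (range f) := by
        apply le_csInf hne
        rintro y ⟨z, rfl⟩
        have := abs_le.mp (hosc x z)
        linarith [this.2]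
      constructor <;> [linarith; linarith]
    have hintc : ∀ (τ : Measure S), IsFiniteMeasure τ →
        ∫ x, (f x - c) ∂τ = ∫ x, f x ∂τ - (τ univ).toReal * c := by
      intro τ hτ
      rw [integral_sub (hint τ hτ) (integrable_const c), integral_const, smul_eq_mul, measureReal_def]
    have hkey : ∫ x, f x ∂μ - ∫ x, f x ∂ν = ∫ x, (f x - c) ∂ρp - ∫ x, (f x - c) ∂ρm := by
      rw [hμint, hνint, hintc ρp inferInstance, hintc ρm inferInstance, hρpuR, hρmuR]
      ring
    have hbp : |∫ x, (f x - c) ∂ρp| ≤ (1/2) * (a - b) := by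
      have := norm_integral_le_of_norm_le_const (μ := ρp) (f := fun x => f x - c) (C := 1/2)
        (ae_of_all _ fun x => by simpa [Real.norm_eq_abs] using hfc2 x)
      rwa [Real.norm_eq_abs, measureReal_def, hρpuR] at this
    have hbm : |∫ x, (f x - c) ∂ρm| ≤ (1/2) * (a - b) := by
      have := norm_integral_le_of_norm_le_const (μ := ρm) (f := fun x => f x - c) (C := 1/2)
        (ae_of_all _ fun x => by simpa [Real.norm_eq_abs] using hfc2 x)
      rwa [Real.norm_eq_abs, measureReal_def, hρmuR] at this
    apply ENNReal.ofReal_le_ofReal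
    rw [hkey]
    have h1 := abs_le.mp hbp
    have h2 := abs_le.mp hbm
    rw [abs_le]
    constructor <;> [linarith [h1.1, h2.2]; linarith [h1.2, h2.1]]
  · -- lower bound
    have claim : ∀ ε : ℝ, 0 < ε →
        ENNReal.ofReal (a - b - ε) ≤
          (⨆ f ∈ {f : S → ℝ | Continuous f ∧ (∃ M, ∀ x, |f x| ≤ M) ∧
              ∀ x y, |f x - f y| ≤ 1},
            ENNReal.ofReal |∫ x, f x ∂μ - ∫ x, f x ∂ν|) := by
      intro ε hε
      have hδ : ENNReal.ofReal (ε/2) ≠ 0 := by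
        simp [ENNReal.ofReal_eq_zero]; linarith
      obtain ⟨F, hFs, hFc, hF⟩ :=
        hs.exists_isClosed_diff_lt (measure_ne_top μ s) (ε := ENNReal.ofReal (ε/2)) hδ
      obtain ⟨U, hsU, hUo, _, hU⟩ :=
        hs.exists_isOpen_diff_lt (measure_ne_top ν s) (ε := ENNReal.ofReal (ε/2)) hδ
      have hdisj : Disjoint Uᶜ F :=
        disjoint_compl_left.mono_right (hFs.trans hsU)
      obtain ⟨g, hg0, hg1, hg01⟩ :=
        exists_continuous_zero_one_of_isClosed hUo.isClosed_compl hFc hdisj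
      have hgmem : (⇑g) ∈ {f : S → ℝ | Continuous f ∧ (∃ M, ∀ x, |f x| ≤ M) ∧
          ∀ x y, |f x - f y| ≤ 1} := by
        refine ⟨g.continuous, ⟨1, fun x => ?_⟩, fun x y => ?_⟩
        · have := hg01 x
          rw [abs_le]
          exact ⟨by linarith [this.1], this.2⟩
        · have h1 := hg01 x
          have h2 := hg01 y
          rw [abs_le]
          constructor <;> [linarith [h1.1, h2.2]; linarith [h1.2, h2.1]]
      have hgint : ∀ (τ : Measure S), IsFiniteMeasure τ → Integrable (⇑g) τ := by
        intro τ hτ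
        refine ⟨g.continuous.aestronglyMeasurable, ?_⟩
        refine HasFiniteIntegral.of_bounded (C := 1) (ae_of_all _ fun x => ?_)
        rw [Real.norm_eq_abs, abs_le]
        exact ⟨by linarith [(hg01 x).1], (hg01 x).2⟩
      -- ∫ g dμ ≥ μ F
      have hμF : (μ F).toReal ≤ ∫ x, g x ∂μ := by
        rw [← measureReal_def, ← integral_indicator_one hFc.measurableSet]
        refine integral_mono ((integrable_const (1:ℝ)).indicator hFc.measurableSet)
          (hgint μ inferInstance) fun x => ?_
        by_cases hx : x ∈ F
        · simp [indicator_of_mem hx, hg1 hx]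
        · simp only [indicator_of_notMem hx]
          exact (hg01 x).1
      have hνU : ∫ x, g x ∂ν ≤ (ν U).toReal := by
        rw [← measureReal_def, ← integral_indicator_one hUo.measurableSet]
        refine integral_mono (hgint ν inferInstance)
          ((integrable_const (1:ℝ)).indicator hUo.measurableSet) fun x => ?_
        by_cases hx : x ∈ U
        · simp only [indicator_of_mem hx]
          exact (hg01 x).2
        · simp only [indicator_of_notMem hx]
          have : g x = 0 := hg0 hx
          simp [this]
      -- measure estimates
      have hμF2 : a - ε/2 ≤ (μ F).toReal := by
        have hsplit : μ s ≤ μ F + μ (s \ F) := by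
          conv_lhs => rw [← union_diff_cancel hFs]
          exact measure_union_le _ _
        have h1 : a ≤ (μ F).toReal + (μ (s \ F)).toReal := by
          rw [← ENNReal.toReal_add (measure_ne_top μ F) (measure_ne_top μ _)]
          exact ENNReal.toReal_mono (by finiteness) hsplit
        have h2 : (μ (s \ F)).toReal ≤ ε/2 :=
          ENNReal.toReal_le_of_le_ofReal (by linarith) hF.le
        linarith
      have hνU2 : (ν U).toReal ≤ b + ε/2 := by
        have hsplit : ν U ≤ ν s + ν (U \ s) := by
          conv_lhs => rw [← union_diff_cancel hsU]
          exact measure_union_le _ _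
        have h1 : (ν U).toReal ≤ b + (ν (U \ s)).toReal := by
          rw [hb, ← ENNReal.toReal_add (measure_ne_top ν s) (measure_ne_top ν _)]
          exact ENNReal.toReal_mono (by finiteness) hsplit
        have h2 : (ν (U \ s)).toReal ≤ ε/2 :=
          ENNReal.toReal_le_of_le_ofReal (by linarith) hU.le
        linarith
      have hdiff : a - b - ε ≤ ∫ x, g x ∂μ - ∫ x, g x ∂ν := by linarith
      refine le_trans ?_ (le_iSup₂_of_le (⇑g) hgmem le_rfl)
      exact ENNReal.ofReal_le_ofReal (hdiff.trans (le_abs_self _))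
    refine ENNReal.le_of_forall_pos_le_add fun ε hε _ => ?_
    have h1 : (a - b) ≤ (a - b - (ε:ℝ)) + (ε:ℝ) := by linarith
    calc ENNReal.ofReal (a - b)
        ≤ ENNReal.ofReal ((a - b - (ε:ℝ)) + (ε:ℝ)) := ENNReal.ofReal_le_ofReal h1
      _ ≤ ENNReal.ofReal (a - b - (ε:ℝ)) + ENNReal.ofReal (ε:ℝ) := ENNReal.ofReal_add_le
      _ ≤ _ + (ε : ℝ≥0∞) := by
          rw [ENNReal.ofReal_coe_nnreal]
          exact add_le_add (claim (ε:ℝ) (by exact_mod_cast hε)) le_rfl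

end
end

section
/- Let S be a Polish space, c : S × S → [0,∞) satisfy condition (★), (Ω, 𝒜, P) a probability space, ℳ a sub-σ-algebra of 𝒜, and X an S-valued random variable with ∫ c(x, x₀) dP_X(x) < ∞ for some x₀ ∈ S. Assume Lip_c is a separating class, i.e. any two Borel probability measures μ, ν on S with ∫ f dμ = ∫ f dν for all f ∈ Lip_c are equal. Then τ_c(ℳ, X) = 0 if and only if X is independent of ℳ. -/
open MeasureTheory ProbabilityTheory ENNReal Set

noncomputable section

/-- The `μ`-completion of the σ-algebra `m`. -/
def muCompletion {α : Type*} (m : MeasurableSpace α) (μ : @Measure α m) : MeasurableSpace α :=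
  letI := m
  inferInstanceAs (MeasurableSpace (MeasureTheory.NullMeasurableSpace α μ))

/-- The universal completion of a σ-algebra: the intersection of the `μ`-completions
over all finite nonnegative measures `μ`. -/
def univCompletion {α : Type*} (m : MeasurableSpace α) : MeasurableSpace α :=
  ⨅ (μ : @Measure α m) (_ : @IsFiniteMeasure α m μ), muCompletion m μ

/-- `Lip_c`: bounded continuous functions `u : S → ℝ` with `|u x - u y| ≤ c x y`. -/
def LipC {S : Type*} [TopologicalSpace S] (c : S → S → ℝ) : Set (S → ℝ) :=
  {u | Continuous u ∧ (∃ M, ∀ x, |u x| ≤ M) ∧ ∀ x y, |u x - u y| ≤ c x y}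

/-- Condition (★): `c x y = sup_{u ∈ Lip_c} |u x - u y|` for all `x, y`. -/
def StarCond {S : Type*} [TopologicalSpace S] (c : S → S → ℝ) : Prop :=
  ∀ x y, c x y = sSup {r : ℝ | ∃ u ∈ LipC c, r = |u x - u y|}

/-- `D(μ,ν)`: couplings of `μ` and `ν`, i.e. probability measures on `S × S`
with first margin `μ` and second margin `ν`. -/
def Couplings {S : Type*} [MeasurableSpace S] (μ ν : Measure S) : Set (Measure (S × S)) :=
  {π | IsProbabilityMeasure π ∧ π.map Prod.fst = μ ∧ π.map Prod.snd = ν}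

/-- The Kantorovich–Rubinštein functional `KR_c(μ,ν)`. -/
def KR {S : Type*} [MeasurableSpace S] (c : S → S → ℝ) (μ ν : Measure S) : ℝ≥0∞ :=
  ⨅ π ∈ Couplings μ ν, ∫⁻ p, ENNReal.ofReal (c p.1 p.2) ∂π

/-- The dual functional `ℓ_c(μ,ν) = sup_{f ∈ Lip_c} |∫ f dμ - ∫ f dν|`. -/
def lipDist {S : Type*} [TopologicalSpace S] [MeasurableSpace S] (c : S → S → ℝ)
    (μ ν : Measure S) : ℝ≥0∞ :=
  ⨆ u ∈ LipC c, ENNReal.ofReal |∫ x, u x ∂μ - ∫ x, u x ∂ν|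

/-- Regular conditional distribution of `Z` given the sub-σ-algebra `M`. -/
def IsRCD {Ω S : Type*} {mΩ : MeasurableSpace Ω} [MeasurableSpace S]
    (P : @Measure Ω mΩ) (M : MeasurableSpace Ω) (Z : Ω → S) (κ : Ω → Measure S) : Prop :=
  letI := mΩ
  (∀ ω, IsProbabilityMeasure (κ ω)) ∧
  (∀ B : Set S, MeasurableSet B → Measurable[M] (fun ω => κ ω B)) ∧
  (∀ A : Set Ω, MeasurableSet[M] A → ∀ B : Set S, MeasurableSet B →
    P (A ∩ Z ⁻¹' B) = ∫⁻ ω in A, κ ω B ∂P)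

/-- The law `P_X` of a random variable. -/
def law {Ω S : Type*} {mΩ : MeasurableSpace Ω} [MeasurableSpace S]
    (P : @Measure Ω mΩ) (X : Ω → S) : Measure S :=
  letI := mΩ
  P.map X

/-- The dependence coefficient `τ_c(ℳ, X)`, expressed through a given regular
conditional distribution `κ` of `X` given `ℳ`. -/
def tauC {Ω S : Type*} {mΩ : MeasurableSpace Ω} [TopologicalSpace S] [MeasurableSpace S]
    (c : S → S → ℝ) (P : @Measure Ω mΩ) (κ : Ω → Measure S) (X : Ω → S) : ℝ≥0∞ :=
  letI := mΩ
  ∫⁻ ω, ⨆ u ∈ LipC c, ENNReal.ofReal |∫ x, u x ∂(κ ω) - ∫ x, u x ∂(law P X)| ∂P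


open Filter in
private lemma countable_generatePiSystem' {α : Type*} {s : Set (Set α)} (hs : s.Countable) :
    (generatePiSystem s).Countable := by
  have h : generatePiSystem s ⊆ (fun t => ⋂₀ t) '' {t : Set (Set α) | t.Finite ∧ t ⊆ s} := by
    intro x hx
    induction hx with
    | base h => exact ⟨{_}, ⟨finite_singleton _, singleton_subset_iff.2 h⟩, by simp⟩
    | inter h1 h2 hne ih1 ih2 =>
      obtain ⟨T1, hT1, rfl⟩ := ih1
      obtain ⟨T2, hT2, rfl⟩ := ih2
      exact ⟨T1 ∪ T2, ⟨hT1.1.union hT2.1, union_subset hT1.2 hT2.2⟩, by simp [sInter_union]⟩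
  exact ((countable_setOf_finite_subset hs).image _).mono h

open Filter in
private lemma key_lint' {S : Type*} [TopologicalSpace S] [MeasurableSpace S] [BorelSpace S]
    (ν : Measure S) [IsProbabilityMeasure ν] {u : S → ℝ} (hu : Continuous u)
    {Mu : ℝ} (hMu : ∀ x, |u x| ≤ Mu) :
    ∫⁻ x, ENNReal.ofReal (u x + Mu) ∂ν = ENNReal.ofReal ((∫ x, u x ∂ν) + Mu) := by
  have hint : Integrable u ν :=
    ⟨hu.aestronglyMeasurable, HasFiniteIntegral.of_bounded (C := Mu)
      (Eventually.of_forall fun x => by simpa using hMu x)⟩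
  rw [← ofReal_integral_eq_lintegral_ofReal (f := fun x => u x + Mu)
    (hint.add (integrable_const _))
    (Eventually.of_forall fun x => by have := abs_le.1 (hMu x); dsimp; linarith),
    integral_add hint (integrable_const _), integral_const]
  simp

open Filter in
private lemma abs_int_le' {S : Type*} [TopologicalSpace S] [MeasurableSpace S] [BorelSpace S]
    (ν : Measure S) [IsProbabilityMeasure ν] {u : S → ℝ}
    {Mu : ℝ} (hMu : ∀ x, |u x| ≤ Mu) : |∫ x, u x ∂ν| ≤ Mu := by
  have := norm_integral_le_of_norm_le_const (μ := ν) (f := u) (C := Mu)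
    (Eventually.of_forall fun x => by simpa using hMu x)
  simpa using this

set_option maxHeartbeats 2000000 in
/-- **`τ_c` characterizes independence**: if `Lip_c` is a separating class, then
`τ_c(ℳ, X) = 0` if and only if `X` is independent of `ℳ`. -/
theorem tauC_eq_zero_iff_indep
    {S : Type*} [TopologicalSpace S] [PolishSpace S] [MeasurableSpace S] [BorelSpace S]
    {Ω : Type*} [mΩ : MeasurableSpace Ω] (P : Measure Ω) [IsProbabilityMeasure P]
    (c : S → S → ℝ) (hc0 : ∀ x y, 0 ≤ c x y) (hstar : StarCond c)
    (X : Ω → S) (hX : Measurable X)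
    (x₀ : S) (hXint : ∫⁻ x, ENNReal.ofReal (c x x₀) ∂(P.map X) < ⊤)
    (hsep : ∀ μ ν : Measure S, IsProbabilityMeasure μ → IsProbabilityMeasure ν →
      (∀ f ∈ LipC c, ∫ x, f x ∂μ = ∫ x, f x ∂ν) → μ = ν)
    (M : MeasurableSpace Ω) (hM : M ≤ mΩ)
    (κX : Ω → Measure S) (hκX : IsRCD P M X κX) :
    tauC c P κX X = 0 ↔ Indep (MeasurableSpace.comap X inferInstance) M P := by
  classical
  letI : MeasurableSpace Ω := mΩ
  obtain ⟨hκprob, hκmeasM, hκeq⟩ := hκX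
  haveI : ∀ ω, IsProbabilityMeasure (κX ω) := hκprob
  haveI hνprob : IsProbabilityMeasure (law P X) := Measure.isProbabilityMeasure_map hX.aemeasurable
  have hκmeas : Measurable[mΩ] κX :=
    Measure.measurable_of_measurable_coe _ (fun B hB => (hκmeasM B hB).mono hM le_rfl)
  have htau_def : tauC c P κX X
      = ∫⁻ ω, ⨆ u ∈ LipC c,
          ENNReal.ofReal |∫ x, u x ∂(κX ω) - ∫ x, u x ∂(law P X)| ∂P := rfl
  constructor
  · -- forward
    intro htau
    rw [htau_def] at htau
    have main : ∀ u, u ∈ LipC c →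
        (∀ᵐ ω ∂P, ∫ x, u x ∂(κX ω) = ∫ x, u x ∂(law P X)) := by
      intro u hu
      obtain ⟨hu_cont, ⟨Mu, hMu⟩, -⟩ := id hu
      set r := ∫ x, u x ∂(law P X) with hr
      have hLmeas : Measurable[mΩ] fun ω => ∫⁻ x, ENNReal.ofReal (u x + Mu) ∂(κX ω) :=
        (Measure.measurable_lintegral
          (ENNReal.measurable_ofReal.comp (hu_cont.measurable.add measurable_const))).comp hκmeas
      have hGmeas : Measurable[mΩ] fun ω => ∫ x, u x ∂(κX ω) := by
        have heq : (fun ω => ∫ x, u x ∂(κX ω))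
            = fun ω => (∫⁻ x, ENNReal.ofReal (u x + Mu) ∂(κX ω)).toReal - Mu := by
          funext ω
          rw [key_lint' (κX ω) hu_cont hMu, ENNReal.toReal_ofReal
            (by have := abs_le.1 (abs_int_le' (κX ω) hMu); linarith)]
          ring
        rw [heq]
        exact hLmeas.ennreal_toReal.sub measurable_const
      have hFmeas : Measurable[mΩ] fun ω => ENNReal.ofReal |∫ x, u x ∂(κX ω) - r| :=
        ENNReal.measurable_ofReal.comp (hGmeas.sub measurable_const).abs
      have hle : ∫⁻ ω, ENNReal.ofReal |∫ x, u x ∂(κX ω) - r| ∂P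
          ≤ ∫⁻ ω, ⨆ u ∈ LipC c,
              ENNReal.ofReal |∫ x, u x ∂(κX ω) - ∫ x, u x ∂(law P X)| ∂P := by
        refine lintegral_mono fun ω => ?_
        exact le_biSup (fun u => ENNReal.ofReal |∫ x, u x ∂(κX ω) - ∫ x, u x ∂(law P X)|) hu
      rw [htau] at hle
      have h0 : (fun ω => ENNReal.ofReal |∫ x, u x ∂(κX ω) - r|) =ᵐ[P] 0 := by
        rw [← lintegral_eq_zero_iff hFmeas]
        exact le_antisymm hle zero_le
      filter_upwards [h0] with ω hω
      have h1 : ENNReal.ofReal |∫ x, u x ∂(κX ω) - r| = 0 := hω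
      rw [ENNReal.ofReal_eq_zero] at h1
      have h2 : |∫ x, u x ∂(κX ω) - r| = 0 :=
        le_antisymm h1 (abs_nonneg _)
      rw [abs_eq_zero, sub_eq_zero] at h2
      exact h2
    rw [ProbabilityTheory.Indep_iff]
    intro t1 t2 h1 ht2
    obtain ⟨B, hB, rfl⟩ := h1
    rw [inter_comm, hκeq t2 ht2 B hB]
    by_cases hPt : P t2 = 0
    · rw [Measure.restrict_eq_zero.mpr hPt, lintegral_zero_measure, hPt, mul_zero]
    · have hPtop : P t2 ≠ ⊤ := measure_ne_top P t2
      set μA : Measure S := (P t2)⁻¹ • ((P.restrict t2).bind κX) with hμA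
      have hbindap : ∀ {B' : Set S}, MeasurableSet B' →
          ((P.restrict t2).bind κX) B' = ∫⁻ ω in t2, κX ω B' ∂P :=
        fun hB' => Measure.bind_apply hB' hκmeas.aemeasurable
      haveI hμAprob : IsProbabilityMeasure μA := by
        constructor
        rw [hμA, Measure.smul_apply, smul_eq_mul, hbindap MeasurableSet.univ]
        simp only [measure_univ]
        rw [setLIntegral_one]
        exact ENNReal.inv_mul_cancel hPt hPtop
      have hint_eq : ∀ u ∈ LipC c, ∫ x, u x ∂μA = ∫ x, u x ∂(law P X) := by
        intro u hu
        obtain ⟨hu_cont, ⟨Mu, hMu⟩, -⟩ := id hu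
        set r := ∫ x, u x ∂(law P X) with hr
        have hL : ∫⁻ x, ENNReal.ofReal (u x + Mu) ∂μA = ENNReal.ofReal (r + Mu) := by
          rw [hμA, lintegral_smul_measure,
            Measure.lintegral_bind hκmeas.aemeasurable
              (show AEMeasurable (fun x => ENNReal.ofReal (u x + Mu)) _ from
                (hu_cont.measurable.add measurable_const).ennreal_ofReal.aemeasurable), smul_eq_mul]
          have hcongr : ∫⁻ ω in t2, ∫⁻ x, ENNReal.ofReal (u x + Mu) ∂(κX ω) ∂P
              = ∫⁻ _ω in t2, ENNReal.ofReal (r + Mu) ∂P := by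
            refine lintegral_congr_ae (ae_restrict_of_ae ?_)
            filter_upwards [main u hu] with ω hω
            rw [key_lint' (κX ω) hu_cont hMu, hω]
          rw [hcongr, setLIntegral_const, mul_comm (ENNReal.ofReal _) (P t2), ← mul_assoc,
            ENNReal.inv_mul_cancel hPt hPtop, one_mul]
        have h2 := key_lint' μA hu_cont hMu
        rw [hL] at h2
        have hb1 := abs_le.1 (abs_int_le' μA (u := u) hMu)
        have hb2 := abs_le.1 (abs_int_le' (law P X) (u := u) hMu)
        rw [ENNReal.ofReal_eq_ofReal_iff (by linarith) (by linarith)] at h2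
        linarith
      have hμeq : μA = law P X := hsep μA (law P X) hμAprob hνprob hint_eq
      have hBeval : (P t2)⁻¹ * ∫⁻ ω in t2, κX ω B ∂P = law P X B := by
        rw [← hbindap hB, ← smul_eq_mul, ← Measure.smul_apply, ← hμA, hμeq]
      have hfin : ∫⁻ ω in t2, κX ω B ∂P = P t2 * law P X B := by
        rw [← hBeval, ← mul_assoc, ENNReal.mul_inv_cancel hPt hPtop, one_mul]
      rw [hfin, mul_comm]
      congr 1
      rw [show law P X = P.map X from rfl, Measure.map_apply hX hB]
  · -- reverse
    intro hindep
    have hind := (ProbabilityTheory.Indep_iff _ _ _).mp hindep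
    have hAE : ∀ B : Set S, MeasurableSet B → ∀ᵐ ω ∂P, κX ω B = law P X B := by
      intro B hB
      have hfm : Measurable[M] fun ω => κX ω B := hκmeasM B hB
      have hgm : Measurable[M] fun _ : Ω => law P X B := measurable_const
      have heq : (fun ω => κX ω B) =ᵐ[P.trim hM] fun _ => law P X B := by
        apply ae_eq_of_forall_setLIntegral_eq_of_sigmaFinite hfm hgm
        intro t ht _
        rw [restrict_trim hM P ht, lintegral_trim hM hfm, lintegral_trim hM hgm]
        rw [show (∫⁻ ω in t, κX ω B ∂P) = P (t ∩ X ⁻¹' B) from (hκeq t ht B hB).symm]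
        rw [setLIntegral_const]
        have hXB : MeasurableSet[MeasurableSpace.comap X inferInstance] (X ⁻¹' B) :=
          ⟨B, hB, rfl⟩
        rw [inter_comm, hind _ t hXB ht,
          show law P X = P.map X from rfl, Measure.map_apply hX hB]
      exact ae_eq_of_ae_eq_trim heq
    set piS := generatePiSystem (MeasurableSpace.countableGeneratingSet S) with hpiS
    have hpiS_count : piS.Countable :=
      countable_generatePiSystem' MeasurableSpace.countable_countableGeneratingSet
    have hgen : (inferInstance : MeasurableSpace S) = MeasurableSpace.generateFrom piS := by
      rw [hpiS, generateFrom_generatePiSystem_eq,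
        MeasurableSpace.generateFrom_countableGeneratingSet]
    have hpiS_meas : ∀ B ∈ piS, MeasurableSet B := by
      intro B hB
      have hBm : MeasurableSet[MeasurableSpace.generateFrom piS] B :=
        MeasurableSpace.measurableSet_generateFrom hB
      rwa [← hgen] at hBm
    have hAEall : ∀ᵐ ω ∂P, ∀ B ∈ piS, κX ω B = law P X B := by
      rw [ae_ball_iff hpiS_count]
      exact fun B hB => hAE B (hpiS_meas B hB)
    have hAEmeasure : ∀ᵐ ω ∂P, κX ω = law P X := by
      filter_upwards [hAEall] with ω hω
      haveI := hκprob ω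
      refine ext_of_generate_finite piS hgen (isPiSystem_generatePiSystem _) hω ?_
      simp
    rw [htau_def]
    have hzero : ∫⁻ ω, ⨆ u ∈ LipC c,
        ENNReal.ofReal |∫ x, u x ∂(κX ω) - ∫ x, u x ∂(law P X)| ∂P
        = ∫⁻ _ω, (0 : ℝ≥0∞) ∂P := by
      refine lintegral_congr_ae ?_
      filter_upwards [hAEmeasure] with ω hω
      rw [hω]
      refine le_antisymm ?_ zero_le
      refine iSup_le fun u => iSup_le fun _ => ?_
      simp
    rw [hzero]
    simp


end
end

section
/- Let S be a Polish space, c : S × S → [0,∞) satisfy condition (★), (Ω, 𝒜, P) a probability space, ℳ a sub-σ-algebra of 𝒜, and X an S-valued random variable with ∫ c(x, x₀) dP_X(x) < ∞ for some x₀ ∈ S. Then for any x ∈ S, τ_c(ℳ, X) ≤ 2 ∫_0^{β(ℳ, σ(X))} Q_{c(X,x)}(u) du, where Q_{c(X,x)} is the generalized inverse of t ↦ P(c(X,x) > t). In particular, if c is bounded by M, then τ_c(ℳ, X) ≤ 2M · β(ℳ, σ(X)). -/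
open MeasureTheory ProbabilityTheory ENNReal Set

noncomputable section

/-- The `β`-mixing coefficient `β(ℳ, σ(X)) = ½ E[‖P_{X|ℳ} - P_X‖_v]`, expressed
through a given regular conditional distribution `κ` of `X` given `ℳ`. -/
def betaMix {Ω S : Type*} {mΩ : MeasurableSpace Ω} [MeasurableSpace S]
    (P : @Measure Ω mΩ) (κ : Ω → Measure S) (X : Ω → S) : ℝ≥0∞ :=
  letI := mΩ
  (∫⁻ ω, tvDist (κ ω) (law P X) ∂P) / 2

/-- The generalized (càdlàg) inverse `Q_Z` of the tail function `t ↦ P(Z > t)` of a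
nonnegative random variable `Z`. -/
def tailInv {Ω : Type*} {mΩ : MeasurableSpace Ω} (P : @Measure Ω mΩ) (Z : Ω → ℝ)
    (u : ℝ) : ℝ :=
  sInf {t : ℝ | 0 ≤ t ∧ P {ω | t < Z ω} ≤ ENNReal.ofReal u}


section Aux

open Filter

lemma key_pointwise {S : Type*} [TopologicalSpace S] [MeasurableSpace S]
    [OpensMeasurableSpace S] (c : S → S → ℝ) (x : S) (T : ℝ) (hT : 0 ≤ T)
    (μ ν : Measure S) [IsProbabilityMeasure μ] [IsProbabilityMeasure ν] :
    (⨆ u ∈ LipC c, ENNReal.ofReal |∫ y, u y ∂μ - ∫ y, u y ∂ν|) ≤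
      ENNReal.ofReal T * tvDist μ ν + ∫⁻ y, ENNReal.ofReal (c y x - T) ∂μ
        + ∫⁻ y, ENNReal.ofReal (c y x - T) ∂ν := by
  refine iSup₂_le fun u hu => ?_
  obtain ⟨hu_cont, ⟨Mu, hMu⟩, hu_lip⟩ := hu
  set g : S → ℝ := fun y => u y - u x with hg
  have hg_cont : Continuous g := hu_cont.sub continuous_const
  have hg_bd : ∀ y, |g y| ≤ c y x := fun y => hu_lip y x
  have hg_int : ∀ (ρ : Measure S), IsFiniteMeasure ρ → Integrable g ρ := by
    intro ρ hρ
    refine Integrable.mono' (integrable_const (Mu + |u x|)) hg_cont.aestronglyMeasurable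
      (ae_of_all _ fun y => ?_)
    have := hMu y
    calc ‖g y‖ = |u y - u x| := rfl
    _ ≤ |u y| + |u x| := abs_sub _ _
    _ ≤ Mu + |u x| := by gcongr
  have hu_int : ∀ (ρ : Measure S), IsFiniteMeasure ρ → Integrable u ρ := by
    intro ρ hρ
    exact Integrable.mono' (integrable_const Mu) hu_cont.aestronglyMeasurable
      (ae_of_all _ fun y => hMu y)
  have hshift : ∀ (ρ : Measure S), IsProbabilityMeasure ρ →
      ∫ y, u y ∂ρ = ∫ y, g y ∂ρ + u x := by
    intro ρ hρ
    rw [hg]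
    rw [integral_sub (hu_int ρ inferInstance) (integrable_const _), integral_const,
      probReal_univ]
    simp
  have hkey : ∫ y, u y ∂μ - ∫ y, u y ∂ν = ∫ y, g y ∂μ - ∫ y, g y ∂ν := by
    rw [hshift μ inferInstance, hshift ν inferInstance]; ring
  -- Hahn decomposition
  obtain ⟨E, hE, hE1, hE2⟩ := hahn_decomposition (μ := μ) (ν := ν)
  have hle₀ : ν.restrict E ≤ μ.restrict E := by
    rw [Measure.le_iff]
    intro A hA
    rw [Measure.restrict_apply hA, Measure.restrict_apply hA]
    exact hE1 _ (hA.inter hE) inter_subset_right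
  have hle₁ : μ.restrict Eᶜ ≤ ν.restrict Eᶜ := by
    rw [Measure.le_iff]
    intro A hA
    rw [Measure.restrict_apply hA, Measure.restrict_apply hA]
    exact hE2 _ (hA.inter hE.compl) inter_subset_right
  set m₀ : Measure S := μ.restrict E - ν.restrict E with hm₀
  set m₁ : Measure S := ν.restrict Eᶜ - μ.restrict Eᶜ with hm₁
  have hsplit₀ : μ.restrict E = m₀ + ν.restrict E :=
    (Measure.sub_add_cancel_of_le hle₀).symm
  have hsplit₁ : ν.restrict Eᶜ = m₁ + μ.restrict Eᶜ :=
    (Measure.sub_add_cancel_of_le hle₁).symm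
  have hm₀le : m₀ ≤ μ := Measure.sub_le.trans Measure.restrict_le_self
  have hm₁le : m₁ ≤ ν := Measure.sub_le.trans Measure.restrict_le_self
  haveI : IsFiniteMeasure m₀ := isFiniteMeasure_of_le μ hm₀le
  haveI : IsFiniteMeasure m₁ := isFiniteMeasure_of_le ν hm₁le
  have hm₀sub : m₀ ≤ μ - ν := by
    refine le_sInf fun d hd => ?_
    rw [Set.mem_setOf_eq] at hd
    rw [Measure.le_iff]
    intro A hA
    rw [hm₀, Measure.sub_apply hA hle₀, Measure.restrict_apply hA, Measure.restrict_apply hA]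
    have h1 : μ (A ∩ E) ≤ d (A ∩ E) + ν (A ∩ E) := Measure.le_iff'.1 hd _
    have h2 : d (A ∩ E) ≤ d A := measure_mono inter_subset_left
    exact le_trans (tsub_le_iff_right.2 h1) h2
  have hm₁sub : m₁ ≤ ν - μ := by
    refine le_sInf fun d hd => ?_
    rw [Set.mem_setOf_eq] at hd
    rw [Measure.le_iff]
    intro A hA
    rw [hm₁, Measure.sub_apply hA hle₁, Measure.restrict_apply hA, Measure.restrict_apply hA]
    have h1 : ν (A ∩ Eᶜ) ≤ d (A ∩ Eᶜ) + μ (A ∩ Eᶜ) := Measure.le_iff'.1 hd _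
    have h2 : d (A ∩ Eᶜ) ≤ d A := measure_mono inter_subset_left
    exact le_trans (tsub_le_iff_right.2 h1) h2
  -- decompose the integral difference
  have hdecomp : ∫ y, g y ∂μ - ∫ y, g y ∂ν = ∫ y, g y ∂m₀ - ∫ y, g y ∂m₁ := by
    have hμd : ∫ y, g y ∂μ = ∫ y, g y ∂(μ.restrict E) + ∫ y, g y ∂(μ.restrict Eᶜ) := by
      rw [← integral_add_measure (hg_int _ inferInstance) (hg_int _ inferInstance),
        Measure.restrict_add_restrict_compl hE]
    have hνd : ∫ y, g y ∂ν = ∫ y, g y ∂(ν.restrict E) + ∫ y, g y ∂(ν.restrict Eᶜ) := by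
      rw [← integral_add_measure (hg_int _ inferInstance) (hg_int _ inferInstance),
        Measure.restrict_add_restrict_compl hE]
    have h₀ : ∫ y, g y ∂(μ.restrict E) = ∫ y, g y ∂m₀ + ∫ y, g y ∂(ν.restrict E) := by
      rw [hsplit₀, integral_add_measure (hg_int _ inferInstance) (hg_int _ inferInstance)]
    have h₁ : ∫ y, g y ∂(ν.restrict Eᶜ) = ∫ y, g y ∂m₁ + ∫ y, g y ∂(μ.restrict Eᶜ) := by
      rw [hsplit₁, integral_add_measure (hg_int _ inferInstance) (hg_int _ inferInstance)]
    rw [hμd, hνd, h₀, h₁]; ring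
  -- now the estimate
  have habs : ENNReal.ofReal |∫ y, u y ∂μ - ∫ y, u y ∂ν| ≤
      ENNReal.ofReal (∫ y, |g y| ∂m₀) + ENNReal.ofReal (∫ y, |g y| ∂m₁) := by
    rw [hkey, hdecomp]
    refine le_trans (ENNReal.ofReal_le_ofReal (abs_sub _ _)) ?_
    refine le_trans (ENNReal.ofReal_add_le) ?_
    have h0 := norm_integral_le_integral_norm (μ := m₀) g
    have h1 := norm_integral_le_integral_norm (μ := m₁) g
    simp only [Real.norm_eq_abs] at h0 h1
    gcongr
  have hlin : ∀ (ρ : Measure S), IsFiniteMeasure ρ →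
      ENNReal.ofReal (∫ y, |g y| ∂ρ) = ∫⁻ y, ENNReal.ofReal |g y| ∂ρ := by
    intro ρ hρ
    exact ofReal_integral_eq_lintegral_ofReal ((hg_int ρ hρ).abs) (ae_of_all _ fun y => abs_nonneg _)
  have hptw : ∀ y, ENNReal.ofReal |g y| ≤
      ENNReal.ofReal T + ENNReal.ofReal (c y x - T) := by
    intro y
    rcases le_total (c y x) T with h | h
    · exact le_add_right (ENNReal.ofReal_le_ofReal ((hg_bd y).trans h))
    · calc ENNReal.ofReal |g y| ≤ ENNReal.ofReal (c y x) :=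
        ENNReal.ofReal_le_ofReal (hg_bd y)
      _ = ENNReal.ofReal (T + (c y x - T)) := by ring_nf
      _ = ENNReal.ofReal T + ENNReal.ofReal (c y x - T) :=
        ENNReal.ofReal_add hT (by linarith)
  have hbound : ∀ (ρ ρ' : Measure S), IsFiniteMeasure ρ → ρ ≤ ρ' →
      ∫⁻ y, ENNReal.ofReal |g y| ∂ρ ≤
        ENNReal.ofReal T * ρ Set.univ + ∫⁻ y, ENNReal.ofReal (c y x - T) ∂ρ' := by
    intro ρ ρ' hρ hρle
    calc ∫⁻ y, ENNReal.ofReal |g y| ∂ρ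
        ≤ ∫⁻ y, (ENNReal.ofReal T + ENNReal.ofReal (c y x - T)) ∂ρ :=
          lintegral_mono hptw
      _ = ENNReal.ofReal T * ρ Set.univ + ∫⁻ y, ENNReal.ofReal (c y x - T) ∂ρ := by
          rw [lintegral_add_left measurable_const, lintegral_const]
      _ ≤ ENNReal.ofReal T * ρ Set.univ + ∫⁻ y, ENNReal.ofReal (c y x - T) ∂ρ' := by
          gcongr
  calc ENNReal.ofReal |∫ y, u y ∂μ - ∫ y, u y ∂ν|
      ≤ ENNReal.ofReal (∫ y, |g y| ∂m₀) + ENNReal.ofReal (∫ y, |g y| ∂m₁) := habs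
    _ = (∫⁻ y, ENNReal.ofReal |g y| ∂m₀) + ∫⁻ y, ENNReal.ofReal |g y| ∂m₁ := by
        rw [hlin m₀ inferInstance, hlin m₁ inferInstance]
    _ ≤ (ENNReal.ofReal T * m₀ Set.univ + ∫⁻ y, ENNReal.ofReal (c y x - T) ∂μ)
        + (ENNReal.ofReal T * m₁ Set.univ + ∫⁻ y, ENNReal.ofReal (c y x - T) ∂ν) :=
        add_le_add (hbound m₀ μ inferInstance hm₀le) (hbound m₁ ν inferInstance hm₁le)
    _ ≤ (ENNReal.ofReal T * (μ - ν) Set.univ + ∫⁻ y, ENNReal.ofReal (c y x - T) ∂μ)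
        + (ENNReal.ofReal T * (ν - μ) Set.univ + ∫⁻ y, ENNReal.ofReal (c y x - T) ∂ν) := by
        gcongr
    _ = ENNReal.ofReal T * tvDist μ ν + ∫⁻ y, ENNReal.ofReal (c y x - T) ∂μ
        + ∫⁻ y, ENNReal.ofReal (c y x - T) ∂ν := by
        rw [tvDist]; ring

end Aux
/-- **Comparison of `τ_c` with the `β`-mixing coefficient**:
`τ_c(ℳ, X) ≤ 2 ∫₀^{β(ℳ,σ(X))} Q_{c(X,x)}(u) du` for every `x`; in particular, if `c`
is bounded by `M₀`, then `τ_c(ℳ, X) ≤ 2 M₀ β(ℳ, σ(X))`. -/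
theorem tauC_le_beta_integral
    {S : Type*} [TopologicalSpace S] [PolishSpace S] [MeasurableSpace S] [BorelSpace S]
    {Ω : Type*} [mΩ : MeasurableSpace Ω] (P : Measure Ω) [IsProbabilityMeasure P]
    (c : S → S → ℝ) (hc0 : ∀ x y, 0 ≤ c x y) (hstar : StarCond c)
    (X : Ω → S) (hX : Measurable X)
    (x₀ : S) (hXint : ∫⁻ x, ENNReal.ofReal (c x x₀) ∂(P.map X) < ⊤)
    (M : MeasurableSpace Ω) (hM : M ≤ mΩ)
    (κX : Ω → Measure S) (hκX : IsRCD P M X κX) :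
    (∀ x : S, tauC c P κX X ≤
      ENNReal.ofReal
        (2 * ∫ u in (0:ℝ)..(betaMix P κX X).toReal,
          tailInv P (fun ω => c (X ω) x) u)) ∧
    (∀ M₀ : ℝ, (∀ x y, c x y ≤ M₀) →
      tauC c P κX X ≤ 2 * ENNReal.ofReal M₀ * betaMix P κX X) := by
  classical
  -- extract kernel facts, then discard the sub-σ-algebra to avoid instance clashes
  have hκprob : ∀ ω, IsProbabilityMeasure (κX ω) := hκX.1
  have hκcoe : ∀ s : Set S, MeasurableSet s → @Measurable Ω ℝ≥0∞ mΩ _ (fun ω => κX ω s) :=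
    fun s hs => (hκX.2.1 s hs).mono hM le_rfl
  have hPX : ∀ s : Set S, MeasurableSet s → P (X ⁻¹' s) = ∫⁻ ω, κX ω s ∂P := by
    intro s hs
    have h := hκX.2.2 Set.univ MeasurableSet.univ s hs
    simpa [Measure.restrict_univ] using h
  clear hκX hM
  clear M
  haveI hκprob' := hκprob
  have hκm : Measurable κX := Measure.measurable_of_measurable_coe _ hκcoe
  -- notation
  set ν : Measure S := P.map X with hν
  haveI hνprob : IsProbabilityMeasure ν := Measure.isProbabilityMeasure_map hX.aemeasurable
  have hlaw : law P X = ν := rfl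
  -- measurability of c (· z) via condition (★)
  have hfm : ∀ z : S, Measurable fun y => c y z := by
    intro z
    have hrange : ∀ y, {r : ℝ | ∃ u ∈ LipC c, r = |u y - u z|} =
        Set.range (fun u : LipC c => |(u : S → ℝ) y - (u : S → ℝ) z|) := by
      intro y
      ext r
      constructor
      · rintro ⟨u, hu, rfl⟩; exact ⟨⟨u, hu⟩, rfl⟩
      · rintro ⟨⟨u, hu⟩, rfl⟩; exact ⟨u, hu, rfl⟩
    have heq : (fun y => c y z) =
        fun y => ⨆ u : LipC c, |(u : S → ℝ) y - (u : S → ℝ) z| := by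
      funext y
      rw [hstar y z, hrange y]
      rfl
    rw [heq]
    refine LowerSemicontinuous.measurable ?_
    refine lowerSemicontinuous_ciSup (fun y => ?_) (fun u => ?_)
    · refine ⟨c y z, ?_⟩
      rintro r ⟨⟨u, hu⟩, rfl⟩
      exact hu.2.2 y z
    · obtain ⟨u, hu⟩ := u
      exact ((hu.1.sub continuous_const).abs).lowerSemicontinuous
  -- triangle inequality for c from (★)
  have htri : ∀ y z : S, c y z ≤ c y x₀ + c x₀ z := by
    intro y z
    rw [hstar y z]
    refine Real.sSup_le ?_ (add_nonneg (hc0 _ _) (hc0 _ _))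
    rintro r ⟨u, hu, rfl⟩
    calc |u y - u z| ≤ |u y - u x₀| + |u x₀ - u z| := abs_sub_le _ _ _
      _ ≤ c y x₀ + c x₀ z := add_le_add (hu.2.2 y x₀) (hu.2.2 x₀ z)
  -- integrability of c (·, z)
  have hfin : ∀ z : S, ∫⁻ y, ENNReal.ofReal (c y z) ∂ν < ⊤ := by
    intro z
    calc ∫⁻ y, ENNReal.ofReal (c y z) ∂ν
        ≤ ∫⁻ y, (ENNReal.ofReal (c x₀ z) + ENNReal.ofReal (c y x₀)) ∂ν := by
          refine lintegral_mono fun y => ?_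
          calc ENNReal.ofReal (c y z) ≤ ENNReal.ofReal (c y x₀ + c x₀ z) :=
            ENNReal.ofReal_le_ofReal (htri y z)
          _ = ENNReal.ofReal (c x₀ z) + ENNReal.ofReal (c y x₀) := by
            rw [← ENNReal.ofReal_add (hc0 _ _) (hc0 _ _), add_comm]
      _ = ENNReal.ofReal (c x₀ z) + ∫⁻ y, ENNReal.ofReal (c y x₀) ∂ν := by
          rw [lintegral_add_left measurable_const, lintegral_const, measure_univ, mul_one]
      _ < ⊤ := ENNReal.add_lt_top.2 ⟨ENNReal.ofReal_lt_top, hXint⟩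
  -- `ν` disintegrates through the kernel
  have hbind : ν = P.bind κX := by
    ext s hs
    rw [hν, Measure.map_apply hX hs, Measure.bind_apply hs hκm.aemeasurable]
    exact hPX s hs
  have hdisint : ∀ g : S → ℝ≥0∞, Measurable g →
      ∫⁻ ω, ∫⁻ y, g y ∂(κX ω) ∂P = ∫⁻ y, g y ∂ν := by
    intro g hg
    rw [hbind, Measure.lintegral_bind hκm.aemeasurable hg.aemeasurable]
  have hβ2 : ∫⁻ ω, tvDist (κX ω) ν ∂P = 2 * betaMix P κX X := by
    rw [betaMix]
    simp only [hlaw]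
    rw [ENNReal.mul_div_cancel'] <;> norm_num
  have hβfin : betaMix P κX X ≤ 1 := by
    have h2 : ∫⁻ ω, tvDist (κX ω) ν ∂P ≤ 2 := by
      calc ∫⁻ ω, tvDist (κX ω) ν ∂P ≤ ∫⁻ _, 2 ∂P := by
            refine lintegral_mono fun ω => ?_
            rw [tvDist]
            calc (κX ω - ν) Set.univ + (ν - κX ω) Set.univ
                ≤ κX ω Set.univ + ν Set.univ :=
                add_le_add (Measure.le_iff'.1 Measure.sub_le _) (Measure.le_iff'.1 Measure.sub_le _)
              _ ≤ 2 := by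
                rw [show ν Set.univ = 1 from measure_univ,
                  show κX ω Set.univ = 1 from measure_univ]
                norm_num
        _ = 2 := by rw [lintegral_const, measure_univ, mul_one]
    rw [betaMix]
    simp only [hlaw]
    calc (∫⁻ ω, tvDist (κX ω) ν ∂P) / 2 ≤ 2 / 2 := by gcongr
    _ = 1 := by rw [ENNReal.div_self] <;> norm_num
  have hβtop : betaMix P κX X ≠ ⊤ := (lt_of_le_of_lt hβfin one_lt_top).ne
  -- The master truncation bound
  have master : ∀ (x : S) (T : ℝ), 0 ≤ T → tauC c P κX X ≤
      2 * (ENNReal.ofReal T * betaMix P κX X + ∫⁻ y, ENNReal.ofReal (c y x - T) ∂ν) := by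
    intro x T hT
    have hR : Measurable fun y => ENNReal.ofReal (c y x - T) :=
      ((hfm x).sub measurable_const).ennreal_ofReal
    have hBmeas : Measurable fun ω => ∫⁻ y, ENNReal.ofReal (c y x - T) ∂(κX ω) :=
      (Measure.measurable_lintegral hR).comp hκm
    have step1 : tauC c P κX X ≤
        ∫⁻ ω, ((∫⁻ y, ENNReal.ofReal (c y x - T) ∂(κX ω)
            + ∫⁻ y, ENNReal.ofReal (c y x - T) ∂ν)
          + ENNReal.ofReal T * tvDist (κX ω) ν) ∂P := by
      rw [tauC]
      simp only [hlaw]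
      refine lintegral_mono fun ω => ?_
      haveI := hκprob ω
      have h := key_pointwise c x T hT (κX ω) ν
      calc (⨆ u ∈ LipC c, ENNReal.ofReal |∫ y, u y ∂(κX ω) - ∫ y, u y ∂ν|)
          ≤ ENNReal.ofReal T * tvDist (κX ω) ν + ∫⁻ y, ENNReal.ofReal (c y x - T) ∂(κX ω)
            + ∫⁻ y, ENNReal.ofReal (c y x - T) ∂ν := h
        _ = (∫⁻ y, ENNReal.ofReal (c y x - T) ∂(κX ω)
            + ∫⁻ y, ENNReal.ofReal (c y x - T) ∂ν)
            + ENNReal.ofReal T * tvDist (κX ω) ν := by ring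
    have step2 : ∫⁻ ω, ((∫⁻ y, ENNReal.ofReal (c y x - T) ∂(κX ω)
            + ∫⁻ y, ENNReal.ofReal (c y x - T) ∂ν)
          + ENNReal.ofReal T * tvDist (κX ω) ν) ∂P
        = (∫⁻ ω, (∫⁻ y, ENNReal.ofReal (c y x - T) ∂(κX ω)
            + ∫⁻ y, ENNReal.ofReal (c y x - T) ∂ν) ∂P)
          + ∫⁻ ω, ENNReal.ofReal T * tvDist (κX ω) ν ∂P :=
      lintegral_add_left (hBmeas.add_const _) _
    have step3 : (∫⁻ ω, (∫⁻ y, ENNReal.ofReal (c y x - T) ∂(κX ω)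
            + ∫⁻ y, ENNReal.ofReal (c y x - T) ∂ν) ∂P)
        = 2 * ∫⁻ y, ENNReal.ofReal (c y x - T) ∂ν := by
      rw [lintegral_add_left hBmeas, hdisint _ hR, lintegral_const, measure_univ, mul_one,
        two_mul]
    have step4 : ∫⁻ ω, ENNReal.ofReal T * tvDist (κX ω) ν ∂P
        = ENNReal.ofReal T * (2 * betaMix P κX X) := by
      rw [lintegral_const_mul' _ _ ENNReal.ofReal_ne_top, hβ2]
    calc tauC c P κX X ≤ _ := step1
      _ = _ := step2
      _ = 2 * (∫⁻ y, ENNReal.ofReal (c y x - T) ∂ν)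
          + ENNReal.ofReal T * (2 * betaMix P κX X) := by rw [step3, step4]
      _ = 2 * (ENNReal.ofReal T * betaMix P κX X
          + ∫⁻ y, ENNReal.ofReal (c y x - T) ∂ν) := by ring
  constructor
  · intro x
    set β := betaMix P κX X with hβ
    set b : ℝ := β.toReal with hb
    set H : ℝ → ℝ≥0∞ := fun t => ν {y | t < c y x} with hH
    have hHanti : Antitone H := fun s t hst =>
      measure_mono fun y hy => lt_of_le_of_lt hst hy
    have hHmeas : Measurable H := hHanti.measurable
    have hHtop : ∀ t, H t ≠ ⊤ := fun t => (measure_lt_top ν _).ne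
    have hsetm : ∀ t : ℝ, MeasurableSet {y : S | t < c y x} := fun t =>
      measurableSet_lt measurable_const (hfm x)
    have hHP : ∀ t, P {ω | t < c (X ω) x} = H t := by
      intro t
      show P {ω | t < c (X ω) x} = ν {y | t < c y x}
      rw [hν, Measure.map_apply hX (hsetm t)]
      rfl
    have hQdef : ∀ u : ℝ, tailInv P (fun ω => c (X ω) x) u
        = sInf {t : ℝ | 0 ≤ t ∧ H t ≤ ENNReal.ofReal u} := by
      intro u
      rw [tailInv]
      congr 1
      ext t
      simp only [Set.mem_setOf_eq, hHP]
    set Q : ℝ → ℝ := tailInv P (fun ω => c (X ω) x) with hQ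
    set I := ∫⁻ y, ENNReal.ofReal (c y x) ∂ν with hI
    have hIfin : I < ⊤ := hfin x
    -- right-continuity of the tail function
    have hrc : ∀ t : ℝ, H t = ⨆ n : ℕ, H (t + 1 / (n + 1)) := by
      intro t
      have hmono : Monotone fun n : ℕ => {y : S | t + 1 / (n + 1) < c y x} := by
        intro m n hmn y hy
        simp only [Set.mem_setOf_eq] at hy ⊢
        have h1 : (1 : ℝ) / (n + 1) ≤ 1 / (m + 1) := by
          apply one_div_le_one_div_of_le
          · positivity
          · exact_mod_cast by omega
        linarith
      have hset : {y : S | t < c y x} = ⋃ n : ℕ, {y : S | t + 1 / (n + 1) < c y x} := by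
        ext y
        simp only [Set.mem_setOf_eq, Set.mem_iUnion]
        constructor
        · intro h
          obtain ⟨n, hn⟩ := exists_nat_one_div_lt (sub_pos.2 h)
          exact ⟨n, by linarith⟩
        · rintro ⟨n, hn⟩
          have hp : (0:ℝ) < 1 / ((n:ℝ) + 1) := by positivity
          linarith
      show ν {y | t < c y x} = ⨆ n : ℕ, ν {y | t + 1 / (n + 1) < c y x}
      rw [hset, (hmono.directed_le).measure_iUnion]
    have hSne : ∀ u : ℝ, 0 < u → ∃ t : ℝ, 0 ≤ t ∧ H t ≤ ENNReal.ofReal u := by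
      intro u hu
      have hu' : u ≠ 0 := hu.ne'
      set t0 : ℝ := I.toReal / u + 1 with ht0def
      have ht0 : 0 < t0 := by positivity
      refine ⟨t0, ht0.le, ?_⟩
      have hmar : ENNReal.ofReal t0 * H t0 ≤ I := by
        have h1 : H t0 ≤ ν {y | ENNReal.ofReal t0 ≤ ENNReal.ofReal (c y x)} :=
          measure_mono fun y hy => ENNReal.ofReal_le_ofReal (le_of_lt hy)
        calc ENNReal.ofReal t0 * H t0
            ≤ ENNReal.ofReal t0 * ν {y | ENNReal.ofReal t0 ≤ ENNReal.ofReal (c y x)} := by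
              gcongr
          _ ≤ I := mul_meas_ge_le_lintegral₀ ((hfm x).ennreal_ofReal).aemeasurable _
      have hIle : I ≤ ENNReal.ofReal t0 * ENNReal.ofReal u := by
        rw [← ENNReal.ofReal_mul ht0.le]
        have h2 : I = ENNReal.ofReal I.toReal := (ENNReal.ofReal_toReal hIfin.ne).symm
        rw [h2]
        apply ENNReal.ofReal_le_ofReal
        have h3 : t0 * u = I.toReal + u := by rw [ht0def]; field_simp
        rw [h3]
        linarith
      have hcomb := hmar.trans hIle
      have ht0ne : ENNReal.ofReal t0 ≠ 0 := by
        simp only [ne_eq, ENNReal.ofReal_eq_zero, not_le]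
        exact ht0
      exact (ENNReal.mul_le_mul_iff_right ht0ne ENNReal.ofReal_ne_top).1 hcomb
    have hQiff : ∀ u t : ℝ, 0 < u → 0 ≤ t → (t < Q u ↔ ENNReal.ofReal u < H t) := by
      intro u t hu ht
      rw [hQdef u]
      have hne : Set.Nonempty {t : ℝ | 0 ≤ t ∧ H t ≤ ENNReal.ofReal u} := hSne u hu
      have hbdd : BddBelow {t : ℝ | 0 ≤ t ∧ H t ≤ ENNReal.ofReal u} := ⟨0, fun s hs => hs.1⟩
      constructor
      · intro h
        by_contra hcon
        push_neg at hcon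
        exact absurd (csInf_le hbdd ⟨ht, hcon⟩) (not_le.2 h)
      · intro h
        by_contra hcon
        push_neg at hcon
        have hkey : ∀ n : ℕ, H (t + 1 / (n + 1)) ≤ ENNReal.ofReal u := by
          intro n
          have hpos : (0:ℝ) < 1 / ((n:ℝ) + 1) := by positivity
          have hlt : sInf {t : ℝ | 0 ≤ t ∧ H t ≤ ENNReal.ofReal u} < t + 1 / (n + 1) :=
            lt_of_le_of_lt hcon (by linarith)
          obtain ⟨s, hsS, hst⟩ := exists_lt_of_csInf_lt hne hlt
          calc H (t + 1 / (n + 1)) ≤ H s := hHanti hst.le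
            _ ≤ ENNReal.ofReal u := hsS.2
        rw [hrc t] at h
        exact absurd h (not_lt.2 (iSup_le hkey))
    have hQ0 : ∀ u : ℝ, 0 ≤ Q u := by
      intro u
      rw [hQdef u]
      exact Real.sInf_nonneg fun s hs => hs.1
    -- layer-cake with threshold
    have hLC : ∀ T : ℝ, 0 ≤ T →
        ∫⁻ y, ENNReal.ofReal (c y x - T) ∂ν = ∫⁻ t in Set.Ioi T, H t := by
      intro T hT
      have hf' : Measurable fun y => max (c y x - T) 0 :=
        ((hfm x).sub measurable_const).max measurable_const
      have h1 : ∫⁻ y, ENNReal.ofReal (c y x - T) ∂ν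
          = ∫⁻ y, ENNReal.ofReal (max (c y x - T) 0) ∂ν := by
        congr 1
        funext y
        rcases le_total (c y x - T) 0 with h | h
        · rw [ENNReal.ofReal_of_nonpos h, max_eq_right h, ENNReal.ofReal_zero]
        · rw [max_eq_left h]
      have hlc := lintegral_eq_lintegral_meas_lt (f := fun y => max (c y x - T) 0) ν
        (ae_of_all _ fun y => le_max_right _ _) hf'.aemeasurable
      rw [h1, hlc]
      have h2 : ∀ s ∈ Set.Ioi (0:ℝ), ν {y | s < max (c y x - T) 0} = H (s + T) := by
        intro s hs
        have hseq : {y : S | s < max (c y x - T) 0} = {y : S | s + T < c y x} := by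
          ext y
          simp only [Set.mem_setOf_eq, lt_max_iff]
          constructor
          · rintro (h | h)
            · linarith
            · exact absurd h (not_lt.2 hs.le)
          · intro h; left; linarith
        rw [hseq]
      rw [setLIntegral_congr_fun measurableSet_Ioi h2]
      have hpre : (fun s : ℝ => s + T) ⁻¹' Set.Ioi T = Set.Ioi 0 := by
        ext s
        simp [Set.mem_Ioi]
      have hmap : (volume : Measure ℝ).restrict (Set.Ioi T)
          = Measure.map (fun s : ℝ => s + T) ((volume : Measure ℝ).restrict (Set.Ioi 0)) := by
        calc (volume : Measure ℝ).restrict (Set.Ioi T)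
            = ((volume : Measure ℝ).map (fun s => s + T)).restrict (Set.Ioi T) := by
              rw [map_add_right_eq_self (volume : Measure ℝ) T]
          _ = Measure.map (fun s : ℝ => s + T)
              ((volume : Measure ℝ).restrict ((fun s : ℝ => s + T) ⁻¹' Set.Ioi T)) :=
              Measure.restrict_map (measurable_add_const T) measurableSet_Ioi
          _ = _ := by rw [hpre]
      rw [hmap, lintegral_map hHmeas (measurable_add_const T)]
    rcases eq_or_ne β 0 with hβ0 | hβpos
    · -- degenerate case: β = 0
      have hb0 : b = 0 := by rw [hb, hβ0, ENNReal.toReal_zero]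
      rw [hb0, intervalIntegral.integral_same, mul_zero, ENNReal.ofReal_zero]
      have key : ∀ n : ℕ, tauC c P κX X ≤ 2 * ∫⁻ y, ENNReal.ofReal (c y x - n) ∂ν := by
        intro n
        have h := master x (n : ℝ) (Nat.cast_nonneg n)
        rwa [hβ0, mul_zero, zero_add] at h
      have hlim : Filter.Tendsto (fun n : ℕ => ∫⁻ y, ENNReal.ofReal (c y x - n) ∂ν)
          Filter.atTop (nhds 0) := by
        have h0 : (0:ℝ≥0∞) = ∫⁻ (_ : S), (0:ℝ≥0∞) ∂ν := by simp
        rw [h0]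
        refine tendsto_lintegral_of_dominated_convergence (fun y => ENNReal.ofReal (c y x))
          (fun n => ((hfm x).sub measurable_const).ennreal_ofReal)
          (fun n => ae_of_all _ fun y => ENNReal.ofReal_le_ofReal
            (by linarith [Nat.cast_nonneg (α := ℝ) n]))
          hIfin.ne (ae_of_all _ fun y => ?_)
        refine Filter.Tendsto.congr' ?_ tendsto_const_nhds
        filter_upwards [Filter.eventually_ge_atTop ⌈c y x⌉₊] with n hn
        refine (ENNReal.ofReal_of_nonpos ?_).symm
        have h1 : c y x ≤ (⌈c y x⌉₊ : ℝ) := Nat.le_ceil _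
        have h2 : ((⌈c y x⌉₊ : ℕ) : ℝ) ≤ (n : ℝ) := Nat.cast_le.2 hn
        linarith
      have h2 : Filter.Tendsto (fun n : ℕ => 2 * ∫⁻ y, ENNReal.ofReal (c y x - n) ∂ν)
          Filter.atTop (nhds 0) := by
        have h := ENNReal.Tendsto.const_mul hlim (Or.inr (by norm_num : (2:ℝ≥0∞) ≠ ⊤))
        simpa using h
      exact ge_of_tendsto' h2 key
    · -- main case: β > 0
      have hbpos : 0 < b := ENNReal.toReal_pos hβpos hβtop
      have hofb : ENNReal.ofReal b = β := ENNReal.ofReal_toReal hβtop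
      set T : ℝ := Q b with hT
      have hT0 : 0 ≤ T := hQ0 b
      have hIooQ : ∀ u : ℝ, 0 < u →
          {t : ℝ | ENNReal.ofReal u < H t} ∩ Set.Ioi 0 = Set.Ioo 0 (Q u) := by
        intro u hu
        ext t
        simp only [Set.mem_inter_iff, Set.mem_setOf_eq, Set.mem_Ioi, Set.mem_Ioo]
        constructor
        · rintro ⟨h1, h2⟩
          exact ⟨h2, (hQiff u t hu h2.le).2 h1⟩
        · rintro ⟨h1, h2⟩
          exact ⟨(hQiff u t hu h1.le).1 h2, h1⟩
      set g2 : ℝ → ℝ → ℝ≥0∞ := fun t u => if ENNReal.ofReal u < H t then 1 else 0 with hg2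
      have hg2m : Measurable fun p : ℝ × ℝ => g2 p.2 p.1 := by
        refine Measurable.ite ?_ measurable_const measurable_const
        have hWeq : {p : ℝ × ℝ | ENNReal.ofReal p.1 < H p.2}
            = (fun p : ℝ × ℝ => (ENNReal.ofReal p.1, H p.2)) ⁻¹'
              {q : ℝ≥0∞ × ℝ≥0∞ | q.1 < q.2} := rfl
        rw [hWeq]
        exact ((ENNReal.measurable_ofReal.comp measurable_fst).prodMk
          (hHmeas.comp measurable_snd)) (measurableSet_lt measurable_fst measurable_snd)
      have hsu : ∀ u : ℝ, MeasurableSet {t : ℝ | ENNReal.ofReal u < H t} :=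
        fun u => hHmeas measurableSet_Ioi
      have hst2 : ∀ t : ℝ, MeasurableSet {u : ℝ | ENNReal.ofReal u < H t} :=
        fun t => ENNReal.measurable_ofReal measurableSet_Iio
      have hinner_t : ∀ u : ℝ, ∫⁻ t in Set.Ioi (0:ℝ), g2 t u
          = volume ({t : ℝ | ENNReal.ofReal u < H t} ∩ Set.Ioi 0) := by
        intro u
        have hind : (fun t => g2 t u)
            = Set.indicator {t : ℝ | ENNReal.ofReal u < H t} (fun _ => (1:ℝ≥0∞)) := by
          funext t
          simp [hg2, Set.indicator_apply]
        rw [hind, lintegral_indicator (hsu u), setLIntegral_one,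
          Measure.restrict_apply (hsu u)]
      have hinner_u : ∀ t : ℝ, ∫⁻ u in Set.Ioo (0:ℝ) b, g2 t u
          = volume ({u : ℝ | ENNReal.ofReal u < H t} ∩ Set.Ioo 0 b) := by
        intro t
        have hind : (fun u => g2 t u)
            = Set.indicator {u : ℝ | ENNReal.ofReal u < H t} (fun _ => (1:ℝ≥0∞)) := by
          funext u
          simp [hg2, Set.indicator_apply]
        rw [hind, lintegral_indicator (hst2 t), setLIntegral_one,
          Measure.restrict_apply (hst2 t)]
      have hKmin : ∀ t : ℝ, volume ({u : ℝ | ENNReal.ofReal u < H t} ∩ Set.Ioo 0 b)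
          = min β (H t) := by
        intro t
        have hne : H t ≠ ⊤ := hHtop t
        have hseteq : {u : ℝ | ENNReal.ofReal u < H t} ∩ Set.Ioo 0 b
            = Set.Ioo 0 (min b (H t).toReal) := by
          ext u
          simp only [Set.mem_inter_iff, Set.mem_setOf_eq, Set.mem_Ioo, lt_min_iff]
          constructor
          · rintro ⟨h1, h2, h3⟩
            exact ⟨h2, h3, (ENNReal.ofReal_lt_iff_lt_toReal h2.le hne).1 h1⟩
          · rintro ⟨h1, h2, h3⟩
            exact ⟨(ENNReal.ofReal_lt_iff_lt_toReal h1.le hne).2 h3, h1, h2⟩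
        rw [hseteq, Real.volume_Ioo, sub_zero]
        rcases le_total b (H t).toReal with h | h
        · rw [min_eq_left h, hofb, min_eq_left]
          rw [← hofb, ← ENNReal.ofReal_toReal hne]
          exact ENNReal.ofReal_le_ofReal h
        · rw [min_eq_right h, ENNReal.ofReal_toReal hne, min_eq_right]
          rw [← hofb, ← ENNReal.ofReal_toReal hne]
          exact ENNReal.ofReal_le_ofReal h
      have hswap : ∫⁻ u in Set.Ioo (0:ℝ) b, ∫⁻ t in Set.Ioi (0:ℝ), g2 t u
          = ∫⁻ t in Set.Ioi (0:ℝ), ∫⁻ u in Set.Ioo (0:ℝ) b, g2 t u :=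
        lintegral_lintegral_swap hg2m.aemeasurable
      have hJ1 : ∫⁻ u in Set.Ioo (0:ℝ) b, ENNReal.ofReal (Q u)
          = ∫⁻ t in Set.Ioi (0:ℝ), min β (H t) := by
        calc ∫⁻ u in Set.Ioo (0:ℝ) b, ENNReal.ofReal (Q u)
            = ∫⁻ u in Set.Ioo (0:ℝ) b, ∫⁻ t in Set.Ioi (0:ℝ), g2 t u := by
              refine setLIntegral_congr_fun measurableSet_Ioo (fun u hu => ?_)
              rw [hinner_t u, hIooQ u hu.1, Real.volume_Ioo, sub_zero]
          _ = ∫⁻ t in Set.Ioi (0:ℝ), ∫⁻ u in Set.Ioo (0:ℝ) b, g2 t u := hswap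
          _ = ∫⁻ t in Set.Ioi (0:ℝ), min β (H t) := by
              refine setLIntegral_congr_fun measurableSet_Ioi (fun t ht => ?_)
              rw [hinner_u t, hKmin t]
      have hmem1 : ∀ t ∈ Set.Ioo (0:ℝ) T, min β (H t) = β := by
        intro t ht
        have h := (hQiff b t hbpos ht.1.le).1 ht.2
        rw [hofb] at h
        exact min_eq_left h.le
      have hmem2 : ∀ t ∈ Set.Ioi T, min β (H t) = H t := by
        intro t ht
        have h1 : ¬ (t < Q b) := not_lt.2 (le_of_lt ht)
        have h2 : ¬ (ENNReal.ofReal b < H t) := fun hc =>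
          h1 ((hQiff b t hbpos (hT0.trans (le_of_lt ht))).2 hc)
        rw [hofb] at h2
        exact min_eq_right (not_lt.1 h2)
      have e1 : ∫⁻ t in Set.Ioo (0:ℝ) T, min β (H t) = ENNReal.ofReal T * β := by
        rw [setLIntegral_congr_fun measurableSet_Ioo hmem1, setLIntegral_const,
          Real.volume_Ioo, sub_zero, mul_comm]
      have e2 : ∫⁻ t in Set.Ioi T, min β (H t) = ∫⁻ y, ENNReal.ofReal (c y x - T) ∂ν := by
        rw [setLIntegral_congr_fun measurableSet_Ioi hmem2]
        exact (hLC T hT0).symm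
      have hdisj1 : Disjoint (Set.Ioo (0:ℝ) T) (Set.Ioi T) := by
        rw [Set.disjoint_left]
        rintro a ⟨_, h2⟩ h3
        exact absurd h3 (not_lt.2 h2.le)
      have hlow : ENNReal.ofReal T * β + ∫⁻ y, ENNReal.ofReal (c y x - T) ∂ν
          ≤ ∫⁻ t in Set.Ioi (0:ℝ), min β (H t) := by
        have hsub : Set.Ioo 0 T ∪ Set.Ioi T ⊆ Set.Ioi (0:ℝ) := by
          rintro t (ht | ht)
          · exact ht.1
          · exact lt_of_le_of_lt hT0 ht
        calc ENNReal.ofReal T * β + ∫⁻ y, ENNReal.ofReal (c y x - T) ∂ν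
            = (∫⁻ t in Set.Ioo (0:ℝ) T, min β (H t)) + ∫⁻ t in Set.Ioi T, min β (H t) := by
              rw [e1, e2]
          _ = ∫⁻ t in Set.Ioo (0:ℝ) T ∪ Set.Ioi T, min β (H t) :=
              (lintegral_union measurableSet_Ioi hdisj1).symm
          _ ≤ ∫⁻ t in Set.Ioi (0:ℝ), min β (H t) := lintegral_mono_set hsub
      have hfinJ : ∫⁻ t in Set.Ioi (0:ℝ), min β (H t) < ⊤ := by
        have hsplit : Set.Ioi (0:ℝ) = Set.Ioc 0 T ∪ Set.Ioi T :=
          (Set.Ioc_union_Ioi_eq_Ioi hT0).symm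
        rw [hsplit, lintegral_union measurableSet_Ioi (Set.Ioc_disjoint_Ioi le_rfl)]
        have h1 : ∫⁻ t in Set.Ioc (0:ℝ) T, min β (H t) ≤ β * ENNReal.ofReal T := by
          calc ∫⁻ t in Set.Ioc (0:ℝ) T, min β (H t)
              ≤ ∫⁻ _ in Set.Ioc (0:ℝ) T, β := lintegral_mono fun t => min_le_left _ _
            _ = β * volume (Set.Ioc (0:ℝ) T) := setLIntegral_const _ _
            _ = β * ENNReal.ofReal T := by rw [Real.volume_Ioc, sub_zero]
        have h2 : ∫⁻ t in Set.Ioi T, min β (H t) ≤ I := by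
          calc ∫⁻ t in Set.Ioi T, min β (H t)
              ≤ ∫⁻ t in Set.Ioi T, H t := lintegral_mono fun t => min_le_right _ _
            _ = ∫⁻ y, ENNReal.ofReal (c y x - T) ∂ν := (hLC T hT0).symm
            _ ≤ I := lintegral_mono fun y => ENNReal.ofReal_le_ofReal (by linarith)
        calc (∫⁻ t in Set.Ioc (0:ℝ) T, min β (H t)) + ∫⁻ t in Set.Ioi T, min β (H t)
            ≤ β * ENNReal.ofReal T + I := add_le_add h1 h2
          _ < ⊤ := by
              rw [ENNReal.add_lt_top]
              exact ⟨lt_top_iff_ne_top.2 (ENNReal.mul_ne_top hβtop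
                ENNReal.ofReal_ne_top), hIfin⟩
      -- measurability / integrability of Q
      set φ : ℝ → ℝ≥0∞ := fun u => volume ({t : ℝ | ENNReal.ofReal u < H t} ∩ Set.Ioi 0)
        with hφ
      have hφm : Measurable φ := by
        refine Antitone.measurable fun u v huv => ?_
        refine measure_mono (Set.inter_subset_inter_left _ fun t ht => ?_)
        exact lt_of_le_of_lt (ENNReal.ofReal_le_ofReal huv) ht
      have hφQ : ∀ u : ℝ, 0 < u → φ u = ENNReal.ofReal (Q u) := by
        intro u hu
        show volume ({t : ℝ | ENNReal.ofReal u < H t} ∩ Set.Ioi 0) = ENNReal.ofReal (Q u)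
        rw [hIooQ u hu, Real.volume_Ioo, sub_zero]
      have hQae : AEMeasurable Q (volume.restrict (Set.Ioc 0 b)) := by
        refine AEMeasurable.congr (hφm.ennreal_toReal).aemeasurable ?_
        refine (ae_restrict_iff' measurableSet_Ioc).2 (ae_of_all _ fun u hu => ?_)
        show (φ u).toReal = Q u
        rw [hφQ u hu.1, ENNReal.toReal_ofReal (hQ0 u)]
      have hQlint : ∫⁻ u in Set.Ioc (0:ℝ) b, ENNReal.ofReal (Q u)
          = ∫⁻ t in Set.Ioi (0:ℝ), min β (H t) := by
        rw [← hJ1]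
        exact setLIntegral_congr (Ioo_ae_eq_Ioc).symm
      have hQint : IntegrableOn Q (Set.Ioc 0 b) volume := by
        constructor
        · exact hQae.aestronglyMeasurable
        · rw [hasFiniteIntegral_iff_ofReal (ae_of_all _ hQ0)]
          rw [show ∫⁻ u, ENNReal.ofReal (Q u) ∂(volume.restrict (Set.Ioc 0 b))
            = ∫⁻ u in Set.Ioc (0:ℝ) b, ENNReal.ofReal (Q u) from rfl, hQlint]
          exact hfinJ
      have hint_eq : ENNReal.ofReal (∫ u in (0:ℝ)..b, Q u)
          = ∫⁻ u in Set.Ioc (0:ℝ) b, ENNReal.ofReal (Q u) := by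
        rw [intervalIntegral.integral_of_le hbpos.le]
        exact ofReal_integral_eq_lintegral_ofReal hQint (ae_restrict_of_ae (ae_of_all _ hQ0))
      calc tauC c P κX X
          ≤ 2 * (ENNReal.ofReal T * β + ∫⁻ y, ENNReal.ofReal (c y x - T) ∂ν) := by
            exact master x T hT0
        _ ≤ 2 * ∫⁻ t in Set.Ioi (0:ℝ), min β (H t) := by gcongr
        _ = 2 * ENNReal.ofReal (∫ u in (0:ℝ)..b, Q u) := by rw [hint_eq, hQlint]
        _ = ENNReal.ofReal (2 * ∫ u in (0:ℝ)..b, Q u) := by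
            rw [ENNReal.ofReal_mul (by norm_num : (0:ℝ) ≤ 2), ENNReal.ofReal_ofNat]
  · -- bounded case
    intro M₀ hM₀
    have hT0 : 0 ≤ M₀ := (hc0 x₀ x₀).trans (hM₀ x₀ x₀)
    have h := master x₀ M₀ hT0
    have hzero : ∫⁻ y, ENNReal.ofReal (c y x₀ - M₀) ∂ν = 0 := by
      rw [show (fun y => ENNReal.ofReal (c y x₀ - M₀)) = fun _ => (0:ℝ≥0∞) from
        funext fun y => ENNReal.ofReal_of_nonpos (by linarith [hM₀ y x₀])]
      simp
    rw [hzero, add_zero, ← mul_assoc] at h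
    exact h

end
end
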